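/- Let m ≥ 2 and let c = v_{2^{m−1}} be the unique vertex of P_{2^m−1} receiving label m in the standard ranking (the middle vertex). Let E(c) be the set of all pairs {c, u} with u ∈ V(P_{2^m−1}) not adjacent to c. Then χ_r(P_{2^m−1} ∪ E(c)) = χ_r(P_{2^m−1}) = m; in particular every edge of E(c) is good for P_{2^m−1}. -/

import Mathlib

open SimpleGraph

/-- `f` is a `k`-ranking of `G`: labels lie in `{1,…,k}` and whenever two distinct
vertices get the same label, every path connecting them contains a vertex of
strictly larger label. -/
def IsRanking {V : Type*} (G : SimpleGraph V) (k : ℕ) (f : V → ℕ) : Prop :=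
  (∀ v, 1 ≤ f v ∧ f v ≤ k) ∧
  ∀ u v, u ≠ v → f u = f v → ∀ p : G.Walk u v, p.IsPath → ∃ w ∈ p.support, f u < f w

/-- The rank number `χᵣ(G)`: the least `k` such that `G` admits a `k`-ranking. -/
noncomputable def rankNumber {V : Type*} (G : SimpleGraph V) : ℕ :=
  sInf {k | ∃ f : V → ℕ, IsRanking G k f}

/-- An edge `e ∉ E(G)` is good for `G` if adding it does not change the rank number. -/
def goodEdge {V : Type*} (G : SimpleGraph V) (e : Sym2 V) : Prop :=
  rankNumber (G ⊔ SimpleGraph.fromEdgeSet {e}) = rankNumber G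

/-- The path `P_n` on vertices `v_1, …, v_n` (vertex `vᵢ` is the natural number `i`),
with edges `vᵢ v_{i+1}` for `1 ≤ i ≤ n - 1`. -/
def pathG (n : ℕ) : SimpleGraph ℕ :=
  SimpleGraph.fromRel (fun a b => 1 ≤ a ∧ b = a + 1 ∧ b ≤ n)

/-- The label of `vᵢ` in the standard ranking of a path: `α + 1` where `2^α` is the
largest power of `2` dividing `i`. -/
def standardLabel (i : ℕ) : ℕ := padicValNat 2 i + 1

/-! ### Auxiliary lemmas -/

lemma pathG_adj {n a b : ℕ} :
    (pathG n).Adj a b ↔ a ≠ b ∧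
      ((1 ≤ a ∧ b = a + 1 ∧ b ≤ n) ∨ (1 ≤ b ∧ a = b + 1 ∧ a ≤ n)) := by
  simp [pathG, SimpleGraph.fromRel_adj]

lemma pathG_adj' {n a b : ℕ} (h : (pathG n).Adj a b) :
    1 ≤ a ∧ a ≤ n ∧ 1 ≤ b ∧ b ≤ n ∧ (b = a + 1 ∨ a = b + 1) := by
  rw [pathG_adj] at h; omega

/-- Discrete intermediate value theorem for walks in a path graph. -/
lemma walk_ivt {n : ℕ} : ∀ {u v : ℕ} (p : (pathG n).Walk u v) (w : ℕ),
    ((u ≤ w ∧ w ≤ v) ∨ (v ≤ w ∧ w ≤ u)) → w ∈ p.support := by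
  intro u v p
  induction p with
  | nil =>
    intro w hw
    simp only [Walk.support_nil, List.mem_singleton]
    omega
  | @cons a b c h p ih =>
    intro w hw
    rcases eq_or_ne w a with rfl | hne
    · simp
    · rw [Walk.support_cons]
      refine List.mem_cons_of_mem _ (ih w ?_)
      have := pathG_adj' h
      omega

/-- The straight walk from `a` to `a + d` in `pathG n`. -/
def straightWalk (n a : ℕ) : (d : ℕ) → 1 ≤ a → a + d ≤ n → (pathG n).Walk a (a + d)
  | 0, _, _ => Walk.nil
  | d + 1, h1, h2 =>
    Walk.concat (straightWalk n a d h1 (by omega))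
      (pathG_adj.mpr ⟨by omega, Or.inl ⟨by omega, rfl, by omega⟩⟩)

lemma straightWalk_support (n a : ℕ) : ∀ (d : ℕ) (h1 : 1 ≤ a) (h2 : a + d ≤ n),
    (straightWalk n a d h1 h2).support = (List.range (d + 1)).map (a + ·) := by
  intro d
  induction d with
  | zero => intro h1 h2; simp [straightWalk, List.range_succ]
  | succ d ih =>
    intro h1 h2
    rw [straightWalk, Walk.support_concat, ih h1 (by omega), List.range_succ (n := d + 1)]
    simp [List.concat_eq_append]

lemma straightWalk_isPath (n a d : ℕ) (h1 : 1 ≤ a) (h2 : a + d ≤ n) :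
    (straightWalk n a d h1 h2).IsPath := by
  refine Walk.IsPath.mk' ?_
  rw [straightWalk_support]
  exact List.Nodup.map (fun x y h => by omega) (List.nodup_range : (List.range (d + 1)).Nodup)

lemma mem_straightWalk_support {n a d w : ℕ} {h1 : 1 ≤ a} {h2 : a + d ≤ n} :
    w ∈ (straightWalk n a d h1 h2).support ↔ a ≤ w ∧ w ≤ a + d := by
  rw [straightWalk_support]
  simp only [List.mem_map, List.mem_range]
  constructor
  · rintro ⟨i, hi, rfl⟩; omega
  · intro hw; exact ⟨w - a, by omega, by omega⟩

/-- Lower bound: any valid ranking of `pathG n` has a label `≥ k` on every block of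
`2^k - 1` consecutive vertices inside `[1, n]`. -/
lemma ranking_lower {n : ℕ} {f : ℕ → ℕ} (hpos : ∀ v, 1 ≤ f v)
    (hf : ∀ u v, u ≠ v → f u = f v → ∀ p : (pathG n).Walk u v, p.IsPath →
      ∃ w ∈ p.support, f u < f w) :
    ∀ k, 1 ≤ k → ∀ a, 1 ≤ a → a + 2 ^ k ≤ n + 2 →
      ∃ w, a ≤ w ∧ w + 2 ≤ a + 2 ^ k ∧ k ≤ f w := by
  intro k hk
  induction k, hk using Nat.le_induction with
  | base =>
    intro a h1 h2
    exact ⟨a, le_rfl, by norm_num, hpos a⟩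
  | succ k hk ih =>
    intro a h1 h2
    have hp2 : 2 ^ (k + 1) = 2 ^ k + 2 ^ k := by rw [pow_succ]; omega
    have h2pos : 1 ≤ 2 ^ k := Nat.one_le_two_pow
    obtain ⟨u, hu1, hu2, hu3⟩ := ih a h1 (by omega)
    obtain ⟨v, hv1, hv2, hv3⟩ := ih (a + 2 ^ k) (by omega) (by omega)
    by_cases hcu : k + 1 ≤ f u
    · exact ⟨u, hu1, by omega, hcu⟩
    by_cases hcv : k + 1 ≤ f v
    · exact ⟨v, by omega, by omega, hcv⟩
    have hfu : f u = k := by omega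
    have hfv : f v = k := by omega
    have huv : u < v := by omega
    have hvn : v ≤ n := by omega
    have hle : u + (v - u) = v := by omega
    set p := (straightWalk n u (v - u) (by omega) (by omega)).copy rfl hle with hpdef
    obtain ⟨w, hw, hw2⟩ := hf u v (by omega) (by omega) p
      (by rw [hpdef, Walk.isPath_copy]; exact straightWalk_isPath _ _ _ _ _)
    have hw' : u ≤ w ∧ w ≤ v := by
      rw [hpdef, Walk.support_copy] at hw
      have := mem_straightWalk_support.mp hw
      omega
    exact ⟨w, by omega, by omega, by omega⟩

/-- Between two distinct numbers with the same 2-adic valuation lies a number with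
strictly larger valuation. -/
lemma exists_mid {u v α : ℕ} (hu : 1 ≤ u) (huv : u < v)
    (h1 : padicValNat 2 u = α) (h2 : padicValNat 2 v = α) :
    ∃ w, u < w ∧ w < v ∧ α + 1 ≤ padicValNat 2 w := by
  obtain ⟨a, ha⟩ := pow_padicValNat_dvd (p := 2) (n := u)
  obtain ⟨b, hb⟩ := pow_padicValNat_dvd (p := 2) (n := v)
  rw [h1] at ha; rw [h2] at hb
  have hpow : 1 ≤ 2 ^ α := Nat.one_le_two_pow
  have hao : ¬ 2 ∣ a := by
    rintro ⟨c, hc⟩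
    have hdvd : 2 ^ (α + 1) ∣ u := ⟨c, by rw [ha, hc]; ring⟩
    have := pow_succ_padicValNat_not_dvd (p := 2) (show u ≠ 0 by omega)
    rw [h1] at this; exact this hdvd
  have hbo : ¬ 2 ∣ b := by
    rintro ⟨c, hc⟩
    have hdvd : 2 ^ (α + 1) ∣ v := ⟨c, by rw [hb, hc]; ring⟩
    have := pow_succ_padicValNat_not_dvd (p := 2) (show v ≠ 0 by omega)
    rw [h2] at this; exact this hdvd
  have hab : a < b := by
    by_contra hc
    push_neg at hc
    have : v ≤ u := by rw [ha, hb]; exact Nat.mul_le_mul_left _ hc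
    omega
  have hab2 : a + 1 < b := by omega
  refine ⟨2 ^ α * (a + 1), ?_, ?_, ?_⟩
  · rw [ha]; nlinarith
  · rw [hb]; nlinarith
  · have hdvd : 2 ^ (α + 1) ∣ 2 ^ α * (a + 1) := by
      obtain ⟨c, hc⟩ : 2 ∣ a + 1 := by omega
      exact ⟨c, by rw [hc]; ring⟩
    exact (padicValNat_dvd_iff_le (by positivity)).mp hdvd

/-- A walk in `pathG n ⊔ fromEdgeSet S` avoiding `c`, where all edges of `S` are
incident to `c`, is a walk in `pathG n`. -/
lemma transfer_walk {n c : ℕ} {S : Set (Sym2 ℕ)} (hS : ∀ e ∈ S, ∃ u, e = s(c, u)) :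
    ∀ {x y : ℕ} (p : ((pathG n) ⊔ SimpleGraph.fromEdgeSet S).Walk x y),
      c ∉ p.support → ∃ q : (pathG n).Walk x y, q.support = p.support := by
  intro x y p
  induction p with
  | nil => exact fun _ => ⟨Walk.nil, rfl⟩
  | @cons a b d h p ih =>
    intro hc
    rw [Walk.support_cons, List.mem_cons] at hc
    push_neg at hc
    obtain ⟨q, hq⟩ := ih hc.2
    have hadj : (pathG n).Adj a b := by
      rw [SimpleGraph.sup_adj] at h
      rcases h with h | h
      · exact h
      · exfalso
        rw [SimpleGraph.fromEdgeSet_adj] at h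
        obtain ⟨u, hu⟩ := hS _ h.1
        rw [Sym2.eq_iff] at hu
        rcases hu with ⟨rfl, rfl⟩ | ⟨rfl, rfl⟩
        · exact hc.1 rfl
        · exact hc.2 p.start_mem_support
    exact ⟨Walk.cons hadj q, by rw [Walk.support_cons, Walk.support_cons, hq]⟩

lemma exists_adj_last {V : Type*} {H : SimpleGraph V} : ∀ {u v : V} (p : H.Walk u v),
    u ≠ v → ∃ x, H.Adj x v := by
  intro u v p
  induction p with
  | nil => exact fun h => absurd rfl h
  | @cons a b d h q ih =>
    intro _
    rcases eq_or_ne b d with rfl | hbd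
    · exact ⟨a, h⟩
    · exact ih hbd

/-- The standard ranking extended by `1` outside the path. -/
def fstd (n : ℕ) (v : ℕ) : ℕ := if 1 ≤ v ∧ v ≤ n then standardLabel v else 1

lemma standardLabel_le {m v : ℕ} (hv1 : 1 ≤ v) (hv2 : v ≤ 2 ^ m - 1) :
    standardLabel v ≤ m := by
  unfold standardLabel
  by_contra hc
  push_neg at hc
  have hdvd : 2 ^ m ∣ v := (padicValNat_dvd_iff_le (by omega)).mpr (by omega)
  have := Nat.le_of_dvd (by omega) hdvd
  have : 1 ≤ 2 ^ m := Nat.one_le_two_pow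
  omega

lemma eq_center_of_val {m v : ℕ} (hm : 1 ≤ m) (hv1 : 1 ≤ v) (hv2 : v ≤ 2 ^ m - 1)
    (hval : padicValNat 2 v = m - 1) : v = 2 ^ (m - 1) := by
  have hdvd : 2 ^ (m - 1) ∣ v := by
    rw [← hval]; exact pow_padicValNat_dvd
  obtain ⟨t, ht⟩ := hdvd
  have hpow : 1 ≤ 2 ^ (m - 1) := Nat.one_le_two_pow
  have hm2 : 2 ^ (m - 1) * 2 = 2 ^ m := by
    rw [← pow_succ]; congr 1; omega
  have ht1 : 1 ≤ t := by
    rcases Nat.eq_zero_or_pos t with rfl | h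
    · omega
    · exact h
  have ht2 : t < 2 := by
    by_contra hc
    push_neg at hc
    have : 2 ^ (m - 1) * 2 ≤ 2 ^ (m - 1) * t := Nat.mul_le_mul_left _ hc
    omega
  have : t = 1 := by omega
  rw [ht, this, mul_one]

lemma center_in_range {m : ℕ} (hm : 1 ≤ m) :
    1 ≤ 2 ^ (m - 1) ∧ 2 ^ (m - 1) ≤ 2 ^ m - 1 := by
  have h1 : 1 ≤ 2 ^ (m - 1) := Nat.one_le_two_pow
  have h2 : 2 ^ (m - 1) * 2 = 2 ^ m := by rw [← pow_succ]; congr 1; omega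
  exact ⟨h1, by omega⟩

/-- Main upper bound: the extended standard ranking is an `m`-ranking of
`pathG (2^m - 1)` together with any set of extra edges incident to the center. -/
lemma upper_ranking (m : ℕ) (hm : 1 ≤ m) {S : Set (Sym2 ℕ)}
    (hS : ∀ e ∈ S, ∃ u, 1 ≤ u ∧ u ≤ 2 ^ m - 1 ∧ e = s(2 ^ (m - 1), u)) :
    IsRanking ((pathG (2 ^ m - 1)) ⊔ SimpleGraph.fromEdgeSet S) m (fstd (2 ^ m - 1)) := by
  set n := 2 ^ m - 1 with hn
  set c := 2 ^ (m - 1) with hcdef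
  obtain ⟨hc1, hc2⟩ := center_in_range hm
  have hcval : padicValNat 2 c = m - 1 := padicValNat.prime_pow _
  have hrange : ∀ x y : ℕ, ((pathG n) ⊔ SimpleGraph.fromEdgeSet S).Adj x y →
      1 ≤ x ∧ x ≤ n ∧ 1 ≤ y ∧ y ≤ n := by
    intro x y h
    rw [SimpleGraph.sup_adj] at h
    rcases h with h | h
    · have := pathG_adj' h; omega
    · rw [SimpleGraph.fromEdgeSet_adj] at h
      obtain ⟨u, hu1, hu2, he⟩ := hS _ h.1
      rw [Sym2.eq_iff] at he
      rcases he with ⟨rfl, rfl⟩ | ⟨rfl, rfl⟩ <;> omega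
  constructor
  · intro v
    unfold fstd
    split
    · rename_i h
      refine ⟨by unfold standardLabel; omega, standardLabel_le h.1 h.2⟩
    · exact ⟨le_rfl, hm⟩
  · intro u v hne hfe p hp
    have hu' : 1 ≤ u ∧ u ≤ n := by
      match p with
      | .nil => exact absurd rfl hne
      | .cons h q => have := hrange _ _ h; omega
    have hv' : 1 ≤ v ∧ v ≤ n := by
      obtain ⟨x, hx⟩ := exists_adj_last p hne
      have := hrange _ _ hx; omega
    have hfu : fstd n u = padicValNat 2 u + 1 := by
      unfold fstd standardLabel; rw [if_pos hu']
    have hfv : fstd n v = padicValNat 2 v + 1 := by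
      unfold fstd standardLabel; rw [if_pos hv']
    have hval : padicValNat 2 u = padicValNat 2 v := by omega
    set α := padicValNat 2 u with hα
    have hαle : α + 1 ≤ m := by
      have := standardLabel_le hu'.1 hu'.2
      unfold standardLabel at this; omega
    have hαlt : α + 1 < m := by
      rcases Nat.lt_or_ge (α + 1) m with h | h
      · exact h
      · exfalso
        have hαm : α = m - 1 := by omega
        have h1 : u = c := eq_center_of_val hm hu'.1 hu'.2 (by omega)
        have h2 : v = c := eq_center_of_val hm hv'.1 hv'.2 (by omega)
        exact hne (h1.trans h2.symm)
    have hfc : fstd n c = m := by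
      unfold fstd standardLabel
      rw [if_pos ⟨hc1, hc2⟩, hcval]
      omega
    by_cases hcmem : c ∈ p.support
    · exact ⟨c, hcmem, by omega⟩
    · obtain ⟨q, hq⟩ := transfer_walk (fun e he => by
        obtain ⟨u', _, _, he'⟩ := hS e he; exact ⟨u', he'⟩) p hcmem
      rcases Nat.lt_or_ge u v with hlt | hge
      · obtain ⟨w, hw1, hw2, hw3⟩ := exists_mid hu'.1 hlt hα.symm (hval ▸ hα.symm)
        have hwmem : w ∈ q.support := walk_ivt q w (Or.inl ⟨by omega, by omega⟩)
        refine ⟨w, hq ▸ hwmem, ?_⟩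
        have hwf : fstd n w = padicValNat 2 w + 1 := by
          unfold fstd standardLabel; rw [if_pos ⟨by omega, by omega⟩]
        omega
      · have hlt : v < u := by omega
        obtain ⟨w, hw1, hw2, hw3⟩ := exists_mid hv'.1 hlt (hval ▸ hα.symm) hα.symm
        have hwmem : w ∈ q.support := walk_ivt q w (Or.inr ⟨by omega, by omega⟩)
        refine ⟨w, hq ▸ hwmem, ?_⟩
        have hwf : fstd n w = padicValNat 2 w + 1 := by
          unfold fstd standardLabel; rw [if_pos ⟨by omega, by omega⟩]
        omega

lemma IsRanking.anti {V : Type*} {G H : SimpleGraph V} (hGH : G ≤ H) {k : ℕ} {f : V → ℕ}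
    (h : IsRanking H k f) : IsRanking G k f := by
  refine ⟨h.1, fun u v hne hfe p hp => ?_⟩
  obtain ⟨w, hw, hw2⟩ := h.2 u v hne hfe (p.mapLe hGH) (hp.mapLe hGH)
  refine ⟨w, ?_, hw2⟩
  rw [Walk.support_map] at hw
  simpa using hw

/-- Any graph between `pathG (2^m-1)` and its center-augmented version has rank number `m`. -/
lemma rank_eq_of_between (m : ℕ) (hm : 1 ≤ m) {S : Set (Sym2 ℕ)}
    (hS : ∀ e ∈ S, ∃ u, 1 ≤ u ∧ u ≤ 2 ^ m - 1 ∧ e = s(2 ^ (m - 1), u))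
    {H : SimpleGraph ℕ} (h1 : pathG (2 ^ m - 1) ≤ H)
    (h2 : H ≤ (pathG (2 ^ m - 1)) ⊔ SimpleGraph.fromEdgeSet S) :
    rankNumber H = m := by
  have hmem : m ∈ {k | ∃ f : ℕ → ℕ, IsRanking H k f} :=
    ⟨fstd (2 ^ m - 1), (upper_ranking m hm hS).anti h2⟩
  have hlow : ∀ k ∈ {k | ∃ f : ℕ → ℕ, IsRanking H k f}, m ≤ k := by
    rintro k ⟨f, hf⟩
    have hfp : IsRanking (pathG (2 ^ m - 1)) k f := hf.anti h1
    have hpos : ∀ v, 1 ≤ f v := fun v => (hfp.1 v).1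
    have h2m : 1 ≤ 2 ^ m := Nat.one_le_two_pow
    obtain ⟨w, _, _, hw3⟩ := ranking_lower hpos hfp.2 m hm 1 le_rfl (by omega)
    exact le_trans hw3 (hfp.1 w).2
  exact le_antisymm (Nat.sInf_le hmem)
    (hlow _ (Nat.sInf_mem (Set.nonempty_of_mem hmem)))

/-- for `m ≥ 2` and `c = v_{2^{m-1}}` (the unique vertex of label `m` in
the standard ranking of `P_{2^m - 1}`), with `E(c)` the set of all pairs `{c, u}` with
`u` a vertex of `P_{2^m - 1}` not adjacent to `c`, we have
`χᵣ(P_{2^m - 1} ∪ E(c)) = χᵣ(P_{2^m - 1}) = m`; in particular every edge of `E(c)` is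
good for `P_{2^m - 1}`. -/
theorem middle_vertex_edges_good (m : ℕ) (hm : 2 ≤ m) :
    rankNumber ((pathG (2 ^ m - 1)) ⊔ SimpleGraph.fromEdgeSet
      {e | ∃ u : ℕ, 1 ≤ u ∧ u ≤ 2 ^ m - 1 ∧ u ≠ 2 ^ (m - 1) ∧
        ¬(pathG (2 ^ m - 1)).Adj (2 ^ (m - 1)) u ∧ e = s(2 ^ (m - 1), u)}) = m ∧
    rankNumber (pathG (2 ^ m - 1)) = m ∧
    ∀ e ∈ {e : Sym2 ℕ | ∃ u : ℕ, 1 ≤ u ∧ u ≤ 2 ^ m - 1 ∧ u ≠ 2 ^ (m - 1) ∧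
        ¬(pathG (2 ^ m - 1)).Adj (2 ^ (m - 1)) u ∧ e = s(2 ^ (m - 1), u)},
      goodEdge (pathG (2 ^ m - 1)) e := by
  have hm1 : 1 ≤ m := by omega
  set S : Set (Sym2 ℕ) := {e | ∃ u : ℕ, 1 ≤ u ∧ u ≤ 2 ^ m - 1 ∧ u ≠ 2 ^ (m - 1) ∧
        ¬(pathG (2 ^ m - 1)).Adj (2 ^ (m - 1)) u ∧ e = s(2 ^ (m - 1), u)} with hSdef
  have hS : ∀ e ∈ S, ∃ u, 1 ≤ u ∧ u ≤ 2 ^ m - 1 ∧ e = s(2 ^ (m - 1), u) := by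
    rintro e ⟨u, h1, h2, _, _, h5⟩
    exact ⟨u, h1, h2, h5⟩
  refine ⟨?_, ?_, ?_⟩
  · exact rank_eq_of_between m hm1 hS le_sup_left le_rfl
  · exact rank_eq_of_between m hm1 hS le_rfl le_sup_left
  · intro e he
    unfold goodEdge
    rw [rank_eq_of_between m hm1 hS le_rfl le_sup_left,
      rank_eq_of_between m hm1 hS le_sup_left
        (sup_le_sup_left (SimpleGraph.fromEdgeSet_mono (Set.singleton_subset_iff.mpr he)) _)]
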